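/- There exist a constant δ₀ ∈ (0,1) and a constant C > 0, depending only on w_- and w_+, such that for all δ ∈ (0, δ₀] and all t > 0: sup_{x ∈ ℝ} |w^r_δ(x,t) − w^r(x/t)| ≤ C δ t^{−1} [ln(1 + t) + |ln δ|]. -/

import Mathlib

/-- `1 - tanh u ≤ 2 exp(-2u)`, with nonnegativity. -/
lemma aux_one_sub_tanh (u : ℝ) :
    0 ≤ 1 - Real.tanh u ∧ 1 - Real.tanh u ≤ 2 * Real.exp (-(2 * u)) := by
  have hc : 0 < Real.cosh u := Real.cosh_pos u
  have h1 : 1 - Real.tanh u = Real.exp (-u) / Real.cosh u := by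
    rw [Real.tanh_eq_sinh_div_cosh, eq_div_iff hc.ne', sub_mul, one_mul,
      div_mul_cancel₀ _ hc.ne']
    exact Real.cosh_sub_sinh u
  constructor
  · rw [h1]; positivity
  · rw [h1]
    have h2 : Real.exp u / 2 ≤ Real.cosh u := by
      rw [Real.cosh_eq]
      have := (Real.exp_pos (-u)).le
      linarith
    have h3 : Real.exp (-u) / Real.cosh u ≤ Real.exp (-u) / (Real.exp u / 2) :=
      div_le_div_of_nonneg_left (Real.exp_pos (-u)).le (by positivity) h2
    refine h3.trans (le_of_eq ?_)
    rw [div_div_eq_mul_div, div_eq_iff (Real.exp_pos u).ne', mul_assoc, ← Real.exp_add]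
    ring_nf

set_option maxHeartbeats 1000000 in
theorem burgers_convergence_to_rarefaction (wm wp : ℝ) (hw : wm < wp) :
    ∃ δ₀ ∈ Set.Ioo (0 : ℝ) 1, ∃ C > (0 : ℝ), ∀ δ ∈ Set.Ioc (0 : ℝ) δ₀,
      ∀ wδ : ℝ → ℝ,
        (∀ x, wδ x = (wp + wm) / 2 + (wp - wm) / 2 * Real.tanh (x / δ)) →
      ∀ x₀ : ℝ → ℝ → ℝ,
        (∀ x t : ℝ, 0 ≤ t → x₀ x t + wδ (x₀ x t) * t = x) →
      ∀ w : ℝ → ℝ → ℝ,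
        (∀ x t : ℝ, 0 ≤ t → w x t = wδ (x₀ x t)) →
      ∀ wr : ℝ → ℝ,
        (∀ ξ : ℝ, ξ ≤ wm → wr ξ = wm) →
        (∀ ξ : ℝ, wm ≤ ξ → ξ ≤ wp → wr ξ = ξ) →
        (∀ ξ : ℝ, wp ≤ ξ → wr ξ = wp) →
      ∀ t : ℝ, 0 < t → ∀ x : ℝ,
        |w x t - wr (x / t)| ≤ C * δ * t⁻¹ * (Real.log (1 + t) + |Real.log δ|) := by
  obtain ⟨a, ha⟩ : ∃ a : ℝ, a = (wp - wm) / 2 := ⟨_, rfl⟩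
  have ha0 : 0 < a := by rw [ha]; linarith
  have hlog2 : (0:ℝ) < Real.log 2 := Real.log_pos (by norm_num)
  obtain ⟨C, hC⟩ : ∃ C : ℝ, C = (2 * a + 1) / Real.log 2 := ⟨_, rfl⟩
  have hC0 : 0 < C := by rw [hC]; positivity
  have hClog2 : C * Real.log 2 = 2 * a + 1 := by
    rw [hC]; exact div_mul_cancel₀ _ hlog2.ne'
  have hC1 : 1 ≤ C := by
    rw [hC, le_div_iff₀ hlog2, one_mul]
    have : Real.log 2 ≤ 1 := by
      have := Real.log_le_sub_one_of_pos (x := 2) (by norm_num)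
      linarith
    linarith
  refine ⟨1/2, ⟨by norm_num, by norm_num⟩, C, hC0, ?_⟩
  rintro δ ⟨hδ0, hδh⟩ wδ hwδ x₀ hx₀ w hweq wr hwr1 hwr2 hwr3 t ht x
  have ht' : (0:ℝ) < 1 + t := by linarith
  obtain ⟨y, hy⟩ : ∃ y : ℝ, y = x₀ x t := ⟨_, rfl⟩
  have hxy : y + wδ y * t = x := by rw [hy]; exact hx₀ x t ht.le
  have hwxt : w x t = wδ y := by rw [hy]; exact hweq x t ht.le
  obtain ⟨T, hT⟩ : ∃ T : ℝ, T = Real.tanh (y / δ) := ⟨_, rfl⟩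
  have hwδy : wδ y = (wp + wm) / 2 + a * T := by rw [hwδ y, ha, hT]
  have hxy2 : y + ((wp + wm) / 2 + a * T) * t = x := by rw [← hwδy]; exact hxy
  -- tanh bounds
  obtain ⟨hT1a, hT1b⟩ := aux_one_sub_tanh (y / δ)
  obtain ⟨hT2a, hT2b⟩ := aux_one_sub_tanh (-(y / δ))
  rw [Real.tanh_neg] at hT2a hT2b
  rw [← hT] at hT1a hT1b hT2a hT2b
  have h1T : 0 ≤ 1 - T := hT1a
  have h1Tb : 1 - T ≤ 2 * Real.exp (-(2 * (y / δ))) := hT1b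
  have h2T : 0 ≤ 1 + T := by linarith
  have h2Tb : 1 + T ≤ 2 * Real.exp (2 * (y / δ)) := by
    rw [show -(2 * -(y / δ)) = 2 * (y / δ) by ring] at hT2b
    linarith
  -- logs
  obtain ⟨L, hL⟩ : ∃ L : ℝ, L = Real.log (1 + t) + |Real.log δ| := ⟨_, rfl⟩
  have hlogδ : Real.log δ < 0 := Real.log_neg hδ0 (by linarith)
  have habs : |Real.log δ| = -Real.log δ := abs_of_neg hlogδ
  have hLδ : Real.log 2 ≤ |Real.log δ| := by
    rw [habs]
    have h2 : Real.log δ ≤ Real.log (1/2) := Real.log_le_log hδ0 hδh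
    rw [show (1:ℝ)/2 = 2⁻¹ by norm_num, Real.log_inv] at h2
    linarith
  have hlt : 0 ≤ Real.log (1 + t) := Real.log_nonneg (by linarith)
  have hL0 : 0 < L := by rw [hL]; linarith
  have hCL : 2 * a + 1 ≤ C * L := by
    calc 2 * a + 1 = C * Real.log 2 := hClog2.symm
    _ ≤ C * L := by
        apply mul_le_mul_of_nonneg_left _ hC0.le
        rw [hL]; linarith
  -- key claims
  have key : |w x t - wr (x / t)| ≤ |y| / t ∧
      |w x t - wr (x / t)| ≤ 2 * a * Real.exp (-(2 * (|y| / δ))) := by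
    rcases le_or_gt (x / t) wm with h1 | h1
    · -- left of the fan: wr = wm
      have hx1 : x ≤ wm * t := (div_le_iff₀ ht).mp h1
      have hylt : y ≤ -(a * (1 + T)) * t := by nlinarith [hxy2]
      have hy0 : y ≤ 0 := by nlinarith [mul_nonneg (mul_nonneg ha0.le h2T) ht.le]
      have hay : |y| = -y := abs_of_nonpos hy0
      have hE : w x t - wr (x / t) = a * (1 + T) := by
        rw [hwxt, hwr1 _ h1, hwδy, ha]; ring
      have hEnn : 0 ≤ a * (1 + T) := mul_nonneg ha0.le h2T
      rw [hE, abs_of_nonneg hEnn]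
      constructor
      · rw [hay, le_div_iff₀ ht]; linarith
      · rw [show -(2 * (|y| / δ)) = 2 * (y / δ) by rw [hay]; ring]
        calc a * (1 + T) ≤ a * (2 * Real.exp (2 * (y / δ))) :=
              mul_le_mul_of_nonneg_left h2Tb ha0.le
        _ = 2 * a * Real.exp (2 * (y / δ)) := by ring
    · rcases le_or_gt wp (x / t) with h2 | h2
      · -- right of the fan: wr = wp
        have hx2 : wp * t ≤ x := (le_div_iff₀ ht).mp h2
        have hygt : a * (1 - T) * t ≤ y := by nlinarith [hxy2]
        have hy0 : 0 ≤ y :=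
          le_trans (mul_nonneg (mul_nonneg ha0.le h1T) ht.le) hygt
        have hay : |y| = y := abs_of_nonneg hy0
        have hE : w x t - wr (x / t) = -(a * (1 - T)) := by
          rw [hwxt, hwr3 _ h2, hwδy, ha]; ring
        have hEnn : 0 ≤ a * (1 - T) := mul_nonneg ha0.le h1T
        rw [hE, abs_neg, abs_of_nonneg hEnn]
        constructor
        · rw [hay, le_div_iff₀ ht]; linarith
        · rw [show -(2 * (|y| / δ)) = -(2 * (y / δ)) by rw [hay]]
          calc a * (1 - T) ≤ a * (2 * Real.exp (-(2 * (y / δ)))) :=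
                mul_le_mul_of_nonneg_left h1Tb ha0.le
          _ = 2 * a * Real.exp (-(2 * (y / δ))) := by ring
      · -- inside the fan: wr ξ = ξ
        have hwrx : wr (x / t) = x / t := hwr2 _ h1.le h2.le
        have hE : w x t - wr (x / t) = -(y / t) := by
          rw [hwxt, hwrx, ← hxy]; field_simp; ring
        have hEabs : |w x t - wr (x / t)| = |y| / t := by
          rw [hE, abs_neg, abs_div, abs_of_pos ht]
        refine ⟨le_of_eq hEabs, ?_⟩
        rw [hEabs]
        have hx1 : wm * t ≤ x := (le_div_iff₀ ht).mp h1.le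
        have hx2 : x ≤ wp * t := (div_le_iff₀ ht).mp h2.le
        rcases le_or_gt 0 y with hy0 | hy0
        · have hay : |y| = y := abs_of_nonneg hy0
          have hylt : y ≤ a * (1 - T) * t := by nlinarith [hxy2]
          rw [show -(2 * (|y| / δ)) = -(2 * (y / δ)) by rw [hay], hay, div_le_iff₀ ht]
          have hstep : a * (1 - T) ≤ 2 * a * Real.exp (-(2 * (y / δ))) := by
            calc a * (1 - T) ≤ a * (2 * Real.exp (-(2 * (y / δ)))) :=
                  mul_le_mul_of_nonneg_left h1Tb ha0.le
            _ = _ := by ring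
          exact hylt.trans (mul_le_mul_of_nonneg_right hstep ht.le)
        · have hay : |y| = -y := abs_of_neg hy0
          have hylt : -(a * (1 + T)) * t ≤ y := by nlinarith [hxy2]
          rw [show -(2 * (|y| / δ)) = 2 * (y / δ) by rw [hay]; ring, hay, div_le_iff₀ ht]
          have hstep : a * (1 + T) ≤ 2 * a * Real.exp (2 * (y / δ)) := by
            calc a * (1 + T) ≤ a * (2 * Real.exp (2 * (y / δ))) :=
                  mul_le_mul_of_nonneg_left h2Tb ha0.le
            _ = _ := by ring
          have := mul_le_mul_of_nonneg_right hstep ht.le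
          linarith
  obtain ⟨keyA, keyB⟩ := key
  rw [show Real.log (1 + t) + |Real.log δ| = L from hL.symm]
  by_cases hcase : |y| ≤ C * δ * L
  · refine keyA.trans ?_
    rw [show C * δ * t⁻¹ * L = (C * δ * L) / t by ring]
    exact (div_le_div_iff_of_pos_right ht).mpr hcase
  · push_neg at hcase
    refine keyB.trans ?_
    have hCLy : C * L ≤ |y| / δ := by
      rw [le_div_iff₀ hδ0]
      calc C * L * δ = C * δ * L := by ring
      _ ≤ |y| := hcase.le
    have hLy : L ≤ |y| / δ := by
      have h1L : 1 * L ≤ C * L := mul_le_mul_of_nonneg_right hC1 hL0.le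
      linarith
    have h2 : Real.exp (-(2 * (|y| / δ))) ≤ Real.exp (-(2 * L)) :=
      Real.exp_le_exp.mpr (by linarith)
    have h3 : Real.exp (-L) = δ / (1 + t) := by
      rw [show -L = Real.log δ - Real.log (1 + t) by rw [hL, habs]; ring,
        Real.exp_sub, Real.exp_log hδ0, Real.exp_log ht']
    have h4 : Real.exp (-(2 * L)) = (δ / (1 + t)) ^ 2 := by
      rw [show -(2 * L) = -L + -L by ring, Real.exp_add, h3]; ring
    have h5 : 2 * a * Real.exp (-(2 * (|y| / δ))) ≤ 2 * a * (δ / (1 + t)) ^ 2 := by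
      rw [← h4]
      exact mul_le_mul_of_nonneg_left h2 (by positivity)
    refine h5.trans ?_
    rw [div_pow, ← mul_div_assoc,
      show C * δ * t⁻¹ * L = (C * δ * L) / t by ring,
      div_le_div_iff₀ (by positivity) ht]
    have hδ1 : δ ≤ 1 := by linarith
    calc 2 * a * δ ^ 2 * t ≤ (2 * a + 1) * (δ * t) := by
          nlinarith [mul_nonneg (mul_pos hδ0 ht).le (show (0:ℝ) ≤ 1 - δ by linarith),
            mul_pos hδ0 ht]
    _ ≤ (C * L) * (δ * t) := mul_le_mul_of_nonneg_right hCL (by positivity)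
    _ ≤ C * δ * L * (1 + t) ^ 2 := by
          nlinarith [mul_nonneg (mul_nonneg (mul_pos hC0 hδ0).le hL0.le)
            (show (0:ℝ) ≤ (1 + t) ^ 2 - t by nlinarith)]
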